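/- Let (X, dist) be a finite metric space with basepoint w, and let dist_T be the Gromov approximating tree pseudo-metric defined by (x|y)'_w = sup over finite sequences from x to y of the minimum of consecutive Gromov products at w. Then (X, dist_T) is 0-hyperbolic. -/

import Mathlib

noncomputable section

/-- Gromov product of `x` and `y` at `w` with respect to the distance function `d`. -/
def gromovProd {X : Type*} (d : X → X → ℝ) (w x y : X) : ℝ :=
  (d x w + d y w - d x y) / 2

/-- Bottleneck value: supremum over finite sequences from `x` to `y` of the minimum
of `c` over consecutive pairs. -/
def bottleneck {α : Type*} (c : α → α → ℝ) (x y : α) : ℝ :=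
  sSup {r : ℝ | ∃ (ℓ : ℕ) (hℓ : 0 < ℓ) (f : ℕ → α), f 0 = x ∧ f ℓ = y ∧
    r = (Finset.range ℓ).inf' (Finset.nonempty_range_iff.mpr hℓ.ne')
      (fun k => c (f k) (f (k + 1)))}

/-- Gromov's approximating tree pseudo-metric. -/
def treeDist {X : Type*} (d : X → X → ℝ) (w : X) (x y : X) : ℝ :=
  gromovProd d w x x + gromovProd d w y y - 2 * bottleneck (gromovProd d w) x y

def gBotSet {α : Type*} (c : α → α → ℝ) (x y : α) : Set ℝ :=
  {r : ℝ | ∃ (ℓ : ℕ) (hℓ : 0 < ℓ) (f : ℕ → α), f 0 = x ∧ f ℓ = y ∧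
    r = (Finset.range ℓ).inf' (Finset.nonempty_range_iff.mpr hℓ.ne')
      (fun k => c (f k) (f (k + 1)))}

lemma bottleneck_eq_sSup {α : Type*} (c : α → α → ℝ) (x y : α) :
    bottleneck c x y = sSup (gBotSet c x y) := rfl

lemma mem_botSet {α : Type*} (c : α → α → ℝ) (x y : α) : c x y ∈ gBotSet c x y := by
  refine ⟨1, one_pos, fun k => if k = 0 then x else y, by simp, by simp, ?_⟩
  simp

lemma botSet_nonempty {α : Type*} (c : α → α → ℝ) (x y : α) : (gBotSet c x y).Nonempty :=
  ⟨_, mem_botSet c x y⟩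

lemma botSet_bddAbove {α : Type*} [Fintype α] (c : α → α → ℝ) (x y : α) :
    BddAbove (gBotSet c x y) := by
  refine ⟨Finset.univ.sup' ⟨x, Finset.mem_univ x⟩ (fun t => c x t), ?_⟩
  rintro r ⟨ℓ, hℓ, f, hf0, hfl, rfl⟩
  calc (Finset.range ℓ).inf' _ (fun k => c (f k) (f (k + 1)))
      ≤ c (f 0) (f 1) := Finset.inf'_le _ (Finset.mem_range.mpr hℓ)
    _ ≤ _ := by rw [hf0]; exact Finset.le_sup' _ (Finset.mem_univ _)

lemma min_bottleneck_le {α : Type*} [Fintype α] (c : α → α → ℝ) (x y z : α) :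
    min (bottleneck c x y) (bottleneck c y z) ≤ bottleneck c x z := by
  apply le_of_forall_lt
  intro t ht
  rw [lt_min_iff] at ht
  obtain ⟨r1, hr1, ht1⟩ := exists_lt_of_lt_csSup (botSet_nonempty c x y) ht.1
  obtain ⟨r2, hr2, ht2⟩ := exists_lt_of_lt_csSup (botSet_nonempty c y z) ht.2
  obtain ⟨ℓ1, h1, f, hf0, hf1, rfl⟩ := hr1
  obtain ⟨ℓ2, h2, g, hg0, hg1, rfl⟩ := hr2
  let F : ℕ → α := fun k => if k ≤ ℓ1 then f k else g (k - ℓ1)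
  have hFdef : ∀ k, F k = if k ≤ ℓ1 then f k else g (k - ℓ1) := fun _ => rfl
  have hpos : 0 < ℓ1 + ℓ2 := by omega
  have hF0 : F 0 = x := by rw [hFdef, if_pos (Nat.zero_le _), hf0]
  have hFe : F (ℓ1 + ℓ2) = z := by
    rw [hFdef, if_neg (by omega), Nat.add_sub_cancel_left, hg1]
  have hterm : ∀ k ∈ Finset.range (ℓ1 + ℓ2), t < c (F k) (F (k + 1)) := by
    intro k hk
    rw [Finset.mem_range] at hk
    by_cases hk1 : k < ℓ1
    · rw [hFdef k, hFdef (k + 1), if_pos (by omega : k ≤ ℓ1), if_pos (by omega : k + 1 ≤ ℓ1)]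
      exact lt_of_lt_of_le ht1 (Finset.inf'_le _ (Finset.mem_range.mpr hk1))
    · have e1 : F k = g (k - ℓ1) := by
        by_cases h : k = ℓ1
        · subst h
          rw [hFdef, if_pos le_rfl, hf1, Nat.sub_self, hg0]
        · rw [hFdef, if_neg (by omega)]
      have e2 : F (k + 1) = g (k - ℓ1 + 1) := by
        rw [hFdef, if_neg (by omega)]
        congr 1
        omega
      rw [e1, e2]
      exact lt_of_lt_of_le ht2 (Finset.inf'_le _ (Finset.mem_range.mpr (by omega)))
  have hmem : ((Finset.range (ℓ1 + ℓ2)).inf' (Finset.nonempty_range_iff.mpr hpos.ne') (fun k => c (F k) (F (k + 1)))) ∈ gBotSet c x z := ⟨ℓ1 + ℓ2, hpos, F, hF0, hFe, rfl⟩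
  have hlt : t < (Finset.range (ℓ1 + ℓ2)).inf' (Finset.nonempty_range_iff.mpr hpos.ne') (fun k => c (F k) (F (k + 1))) := (Finset.lt_inf'_iff _).mpr hterm
  exact lt_of_lt_of_le hlt (le_csSup (botSet_bddAbove c x z) hmem)

lemma botSet_subset_rev {α : Type*} (c : α → α → ℝ) (hc : ∀ a b, c a b = c b a) (x y : α) :
    gBotSet c x y ⊆ gBotSet c y x := by
  rintro r ⟨ℓ, hℓ, f, hf0, hfl, rfl⟩
  have hne := Finset.nonempty_range_iff.mpr hℓ.ne'
  have eL : ∀ j, j < ℓ →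
      c (f (ℓ - j)) (f (ℓ - (j + 1))) = c (f (ℓ - 1 - j)) (f (ℓ - 1 - j + 1)) := by
    intro j hj
    have e1 : ℓ - (j + 1) = ℓ - 1 - j := by omega
    have e2 : ℓ - j = ℓ - 1 - j + 1 := by omega
    rw [e1, e2, hc]
  refine ⟨ℓ, hℓ, fun k => f (ℓ - k), by simpa using hfl, by simpa using hf0, ?_⟩
  show ((Finset.range ℓ).inf' hne fun k => c (f k) (f (k + 1))) =
    (Finset.range ℓ).inf' hne fun k => c (f (ℓ - k)) (f (ℓ - (k + 1)))
  apply le_antisymm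
  · apply Finset.le_inf'
    intro j hj
    have hj' := Finset.mem_range.mp hj
    refine le_trans
      (Finset.inf'_le _ (Finset.mem_range.mpr (show ℓ - 1 - j < ℓ by omega))) ?_
    rw [eL j hj']
  · apply Finset.le_inf'
    intro j hj
    have hj' := Finset.mem_range.mp hj
    have h2 := eL (ℓ - 1 - j) (by omega)
    have ej : ℓ - 1 - (ℓ - 1 - j) = j := by omega
    rw [ej] at h2
    rw [← h2]
    exact Finset.inf'_le _ (Finset.mem_range.mpr (by omega))

lemma bottleneck_symm {α : Type*} [Fintype α] (c : α → α → ℝ) (hc : ∀ a b, c a b = c b a)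
    (x y : α) : bottleneck c x y = bottleneck c y x :=
  le_antisymm
    (csSup_le_csSup (botSet_bddAbove c y x) (botSet_nonempty c x y) (botSet_subset_rev c hc x y))
    (csSup_le_csSup (botSet_bddAbove c x y) (botSet_nonempty c y x) (botSet_subset_rev c hc y x))

set_option maxHeartbeats 1000000 in
theorem treeDist_zero_hyperbolic {X : Type*} [MetricSpace X] [Fintype X] (w : X) :
    ∀ x y z v : X, gromovProd (treeDist dist w) v x z ≥
      min (gromovProd (treeDist dist w) v x y) (gromovProd (treeDist dist w) v y z) := by
  intro x y z v
  have hsymm : ∀ a b : X, gromovProd dist w a b = gromovProd dist w b a := by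
    intro a b
    unfold gromovProd
    rw [dist_comm a b]
    ring
  have h1 := min_le_iff.mp (min_bottleneck_le (gromovProd dist w) x y z)
  have h2' := min_bottleneck_le (gromovProd dist w) x v z
  rw [bottleneck_symm (gromovProd dist w) hsymm v z] at h2'
  have h2 := min_le_iff.mp h2'
  have h3' := min_bottleneck_le (gromovProd dist w) y x v
  rw [bottleneck_symm (gromovProd dist w) hsymm y x] at h3'
  have h3 := min_le_iff.mp h3'
  have h4 := min_le_iff.mp (min_bottleneck_le (gromovProd dist w) y z v)
  clear h2' h3'
  rw [ge_iff_le]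
  rcases le_total (gromovProd (treeDist dist w) v x y) (gromovProd (treeDist dist w) v y z)
    with hm | hm
  · rw [min_eq_left hm]
    simp only [gromovProd, treeDist, dist_self] at *
    rcases h1 with h1 | h1 <;> rcases h2 with h2 | h2 <;>
      rcases h3 with h3 | h3 <;> rcases h4 with h4 | h4 <;> linarith
  · rw [min_eq_right hm]
    simp only [gromovProd, treeDist, dist_self] at *
    rcases h1 with h1 | h1 <;> rcases h2 with h2 | h2 <;>
      rcases h3 with h3 | h3 <;> rcases h4 with h4 | h4 <;> linarith
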